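/- Let a > 0 and ρ ∈ (−1,1) with (a,ρ) ≠ (1,0), let V_0 be the 2×2 matrix with rows (a, ρ) and (ρ, 1/a), and let S = V_0^{1/2} / trace(V_0^{1/2}) be the spatial sign covariance matrix of a bivariate elliptical distribution with shape V_0 (here V_0^{1/2} is the positive definite matrix square root). Denote the entries of S by s_{11}, s_{12}. For a symmetric 2×2 matrix with entries m_{11}, m_{12} define ρ̂(m_{11}, m_{12}) = c m_{12} b / √((m_{12}² + b²)² + (m_{12} c b)²), where d = 1/2 + √((m_{11} − 1/2)² + m_{12}²), b = d − m_{11}, c = (2d − 1)/(d(1 − d)). For x = (x_1, x_2) ∈ ℝ², x ≠ 0, let S_ε = (1−ε) S + ε x x^T/(x^T x) with entries s_{11}(ε), s_{12}(ε). Then the function ε ↦ ρ̂(s_{11}(ε), s_{12}(ε)) is differentiable at ε = 0 with derivative equal to [ −{ (a²+1) ρ √(1−ρ²) + 2 a ρ (1−ρ²) } (a² x_2² + x_1²) − { (a⁴ + 6a² + 1)(ρ² − 1) + 2a(a²+1) √(1−ρ²) (ρ² − 2) } x_1 x_2 ] / [ { 2 a² √(1−ρ²) + a(a²+1) } (x_1²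 + x_2²) ]. -/

import Mathlib

open Matrix Real
set_option maxHeartbeats 1600000

/-- The spatial sign correlation read off from the entries m₁₁, m₁₂ of a (2×2, symmetric)
matrix: ρ̂ = c m₁₂ b / √((m₁₂² + b²)² + (m₁₂ c b)²), where
d = 1/2 + √((m₁₁ − 1/2)² + m₁₂²), b = d − m₁₁, c = (2d − 1)/(d(1 − d)). -/
noncomputable def rhoFromS (m₁₁ m₁₂ : ℝ) : ℝ :=
  let d := 1 / 2 + Real.sqrt ((m₁₁ - 1 / 2) ^ 2 + m₁₂ ^ 2)
  let b := d - m₁₁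
  let c := (2 * d - 1) / (d * (1 - d))
  c * m₁₂ * b / Real.sqrt ((m₁₂ ^ 2 + b ^ 2) ^ 2 + (m₁₂ * c * b) ^ 2)

noncomputable def rho2 (m₁₁ m₁₂ : ℝ) : ℝ :=
  let w := Real.sqrt ((m₁₁ - 1 / 2) ^ 2 + m₁₂ ^ 2)
  let c := 2 * w / (1 / 4 - w ^ 2)
  c * m₁₂ / Real.sqrt (4 * w ^ 2 + (c * m₁₂) ^ 2)

lemma rhoFromS_eq_rho2 (m₁₁ m₁₂ : ℝ) : rhoFromS m₁₁ m₁₂ = rho2 m₁₁ m₁₂ := by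
  unfold rhoFromS rho2
  set w := Real.sqrt ((m₁₁ - 1 / 2) ^ 2 + m₁₂ ^ 2) with hwdef
  have hw0 : 0 ≤ w := Real.sqrt_nonneg _
  have hw2 : w ^ 2 = (m₁₁ - 1 / 2) ^ 2 + m₁₂ ^ 2 := Real.sq_sqrt (by positivity)
  have hwge : m₁₁ - 1 / 2 ≤ w := by
    calc m₁₁ - 1 / 2 ≤ |m₁₁ - 1 / 2| := le_abs_self _
    _ = Real.sqrt ((m₁₁ - 1 / 2) ^ 2) := (Real.sqrt_sq_eq_abs _).symm
    _ ≤ w := Real.sqrt_le_sqrt (by nlinarith [sq_nonneg m₁₂])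
  have hbnn : (0:ℝ) ≤ 1 / 2 + w - m₁₁ := by linarith
  have hc : (2 * (1 / 2 + w) - 1) / ((1 / 2 + w) * (1 - (1 / 2 + w))) = 2 * w / (1 / 4 - w ^ 2) := by
    rw [show (2 * (1 / 2 + w) - 1) = 2 * w by ring,
        show (1 / 2 + w) * (1 - (1 / 2 + w)) = 1 / 4 - w ^ 2 by ring]
  have hkey : m₁₂ ^ 2 + (1 / 2 + w - m₁₁) ^ 2 = 2 * w * (1 / 2 + w - m₁₁) := by
    linear_combination -hw2
  have hsq : (m₁₂ ^ 2 + (1 / 2 + w - m₁₁) ^ 2) ^ 2 +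
      (m₁₂ * (2 * w / (1 / 4 - w ^ 2)) * (1 / 2 + w - m₁₁)) ^ 2
      = (1 / 2 + w - m₁₁) ^ 2 * (4 * w ^ 2 + (2 * w / (1 / 4 - w ^ 2) * m₁₂) ^ 2) := by
    rw [hkey]; ring
  simp only [hc, hsq]
  rw [Real.sqrt_mul (sq_nonneg _), Real.sqrt_sq hbnn]
  rcases eq_or_ne (1 / 2 + w - m₁₁) 0 with h0 | h0
  · have hm0 : m₁₂ = 0 := by
      have := hkey
      rw [h0] at this
      nlinarith [sq_nonneg m₁₂]
    simp [h0, hm0]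
  · rw [mul_comm (1 / 2 + w - m₁₁) (Real.sqrt (4 * w ^ 2 + (2 * w / (1 / 4 - w ^ 2) * m₁₂) ^ 2))]
    rw [mul_div_mul_right _ _ h0]


lemma rho2_hasDerivAt (A B C D w W' k c c' N N' s δ : ℝ)
    (hWpos : (A - 1 / 2) ^ 2 + C ^ 2 ≠ 0)
    (hw : w = Real.sqrt ((A - 1 / 2) ^ 2 + C ^ 2))
    (hW' : W' = (2 * (A - 1 / 2) * B + 2 * C * D) / (2 * w))
    (hk : k = 1 / 4 - w ^ 2) (hk0 : k ≠ 0)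
    (hc : c = 2 * w / k)
    (hc' : c' = (2 * W' * k - 2 * w * (-(2 * w * W'))) / k ^ 2)
    (hN : N = c * C) (hN' : N' = c' * C + c * D)
    (hs : s = Real.sqrt (4 * w ^ 2 + N ^ 2))
    (hδ : δ = (N' * s - N * ((8 * w * W' + 2 * N * N') / (2 * s))) / s ^ 2) :
    HasDerivAt (fun ε : ℝ => rho2 (A + ε * B) (C + ε * D)) δ 0 := by
  have hWpos' : 0 < (A - 1 / 2) ^ 2 + C ^ 2 :=
    lt_of_le_of_ne (by positivity) (Ne.symm hWpos)
  have hwpos : 0 < Real.sqrt ((A - 1 / 2) ^ 2 + C ^ 2) := Real.sqrt_pos.2 hWpos'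
  subst hδ hN' hN hc' hc hW' hs hk hw
  have hm1 : HasDerivAt (fun ε : ℝ => A + ε * B) B 0 := by
    simpa using ((hasDerivAt_id (0:ℝ)).mul_const B).const_add A
  have hm2 : HasDerivAt (fun ε : ℝ => C + ε * D) D 0 := by
    simpa using ((hasDerivAt_id (0:ℝ)).mul_const D).const_add C
  have hP : HasDerivAt (fun ε : ℝ => (A + ε * B - 1 / 2) ^ 2 + (C + ε * D) ^ 2)
      (2 * (A - 1 / 2) * B + 2 * C * D) 0 := by
    have h := ((hm1.sub_const (1 / 2)).pow 2).add (hm2.pow 2)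
    refine h.congr_deriv ?_
    norm_num
  have hwd : HasDerivAt (fun ε : ℝ => Real.sqrt ((A + ε * B - 1 / 2) ^ 2 + (C + ε * D) ^ 2))
      ((2 * (A - 1 / 2) * B + 2 * C * D) / (2 * Real.sqrt ((A - 1 / 2) ^ 2 + C ^ 2))) 0 := by
    have h := hP.sqrt (by simpa using hWpos)
    simpa using h
  have hkd : HasDerivAt (fun ε : ℝ => 1 / 4 - Real.sqrt ((A + ε * B - 1 / 2) ^ 2 + (C + ε * D) ^ 2) ^ 2)
      (-(2 * Real.sqrt ((A - 1 / 2) ^ 2 + C ^ 2) * ((2 * (A - 1 / 2) * B + 2 * C * D) / (2 * Real.sqrt ((A - 1 / 2) ^ 2 + C ^ 2))))) 0 := by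
    have h := (hwd.pow 2).const_sub (1 / 4)
    refine h.congr_deriv ?_
    norm_num
  have hk0' : (1 / 4 - Real.sqrt ((A - 1 / 2) ^ 2 + C ^ 2) ^ 2) ≠ 0 := hk0
  have hcd : HasDerivAt (fun ε : ℝ => (2 * Real.sqrt ((A + ε * B - 1 / 2) ^ 2 + (C + ε * D) ^ 2) / (1 / 4 - Real.sqrt ((A + ε * B - 1 / 2) ^ 2 + (C + ε * D) ^ 2) ^ 2))) ((2 * ((2 * (A - 1 / 2) * B + 2 * C * D) / (2 * Real.sqrt ((A - 1 / 2) ^ 2 + C ^ 2))) * (1 / 4 - Real.sqrt ((A - 1 / 2) ^ 2 + C ^ 2) ^ 2) - 2 * Real.sqrt ((A - 1 / 2) ^ 2 + C ^ 2) * (-(2 * Real.sqrt ((A - 1 / 2) ^ 2 + C ^ 2) * ((2 * (A - 1 / 2) * B + 2 * C * D) / (2 * Real.sqrt ((A - 1 / 2) ^ 2 + C ^ 2)))))) / (1 / 4 - Real.sqrt ((A - 1 / 2) ^ 2 + C ^ 2) ^ 2) ^ 2) 0 := by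
    have h := (hwd.const_mul 2).div hkd (by simpa using hk0')
    refine h.congr_deriv ?_
    norm_num
  have hNd : HasDerivAt (fun ε : ℝ => (2 * Real.sqrt ((A + ε * B - 1 / 2) ^ 2 + (C + ε * D) ^ 2) / (1 / 4 - Real.sqrt ((A + ε * B - 1 / 2) ^ 2 + (C + ε * D) ^ 2) ^ 2)) * (C + ε * D)) (((2 * ((2 * (A - 1 / 2) * B + 2 * C * D) / (2 * Real.sqrt ((A - 1 / 2) ^ 2 + C ^ 2))) * (1 / 4 - Real.sqrt ((A - 1 / 2) ^ 2 + C ^ 2) ^ 2) - 2 * Real.sqrt ((A - 1 / 2) ^ 2 + C ^ 2) * (-(2 * Real.sqrt ((A - 1 / 2) ^ 2 + C ^ 2) * ((2 * (A - 1 / 2) * B + 2 * C * D) / (2 * Real.sqrt ((A - 1 / 2) ^ 2 + C ^ 2)))))) / (1 / 4 - Real.sqrt ((A - 1 / 2) ^ 2 + C ^ 2) ^ 2) ^ 2) * C + (2 * Real.sqrt ((A - 1 / 2) ^ 2 + C ^ 2) / (1 / 4 - Real.sqrt ((A - 1 / 2) ^ 2 + C ^ 2) ^ 2)) * D) 0 :=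 by
    have h := hcd.mul hm2
    refine h.congr_deriv ?_
    norm_num
  have hMd : HasDerivAt (fun ε : ℝ => 4 * Real.sqrt ((A + ε * B - 1 / 2) ^ 2 + (C + ε * D) ^ 2) ^ 2 + ((2 * Real.sqrt ((A + ε * B - 1 / 2) ^ 2 + (C + ε * D) ^ 2) / (1 / 4 - Real.sqrt ((A + ε * B - 1 / 2) ^ 2 + (C + ε * D) ^ 2) ^ 2)) * (C + ε * D)) ^ 2) (8 * Real.sqrt ((A - 1 / 2) ^ 2 + C ^ 2) * ((2 * (A - 1 / 2) * B + 2 * C * D) / (2 * Real.sqrt ((A - 1 / 2) ^ 2 + C ^ 2))) + 2 * ((2 * Real.sqrt ((A - 1 / 2) ^ 2 + C ^ 2) / (1 / 4 - Real.sqrt ((A - 1 / 2) ^ 2 + C ^ 2) ^ 2)) * C) * (((2 * ((2 * (A - 1 / 2) * B + 2 * C * D) / (2 * Real.sqrt ((A - 1 / 2) ^ 2 + C ^ 2))) * (1 / 4 - Real.sqrt ((A - 1 / 2) ^ 2 + C ^ 2) ^ 2) - 2 * Real.sqrt ((A - 1 / 2) ^ 2 + C ^ 2) * (-(2 * Real.sqrt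 ((A - 1 / 2) ^ 2 + C ^ 2) * ((2 * (A - 1 / 2) * B + 2 * C * D) / (2 * Real.sqrt ((A - 1 / 2) ^ 2 + C ^ 2)))))) / (1 / 4 - Real.sqrt ((A - 1 / 2) ^ 2 + C ^ 2) ^ 2) ^ 2) * C + (2 * Real.sqrt ((A - 1 / 2) ^ 2 + C ^ 2) / (1 / 4 - Real.sqrt ((A - 1 / 2) ^ 2 + C ^ 2) ^ 2)) * D)) 0 := by
    have h := ((hwd.pow 2).const_mul 4).add (hNd.pow 2)
    refine h.congr_deriv ?_
    norm_num
    ring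
  have hargpos : (0:ℝ) < 4 * Real.sqrt ((A - 1 / 2) ^ 2 + C ^ 2) ^ 2 + ((2 * Real.sqrt ((A - 1 / 2) ^ 2 + C ^ 2) / (1 / 4 - Real.sqrt ((A - 1 / 2) ^ 2 + C ^ 2) ^ 2)) * C) ^ 2 := by
    nlinarith [hwpos, sq_nonneg ((2 * Real.sqrt ((A - 1 / 2) ^ 2 + C ^ 2) / (1 / 4 - Real.sqrt ((A - 1 / 2) ^ 2 + C ^ 2) ^ 2)) * C)]
  have hsd : HasDerivAt (fun ε : ℝ => Real.sqrt (4 * Real.sqrt ((A + ε * B - 1 / 2) ^ 2 + (C + ε * D) ^ 2) ^ 2 + ((2 * Real.sqrt ((A + ε * B - 1 / 2) ^ 2 + (C + ε * D) ^ 2) / (1 / 4 - Real.sqrt ((A + ε * B - 1 / 2) ^ 2 + (C + ε * D) ^ 2) ^ 2)) * (C + ε * D)) ^ 2))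
      ((8 * Real.sqrt ((A - 1 / 2) ^ 2 + C ^ 2) * ((2 * (A - 1 / 2) * B + 2 * C * D) / (2 * Real.sqrt ((A - 1 / 2) ^ 2 + C ^ 2))) + 2 * ((2 * Real.sqrt ((A - 1 / 2) ^ 2 + C ^ 2) / (1 / 4 - Real.sqrt ((A - 1 / 2) ^ 2 + C ^ 2) ^ 2)) * C) * (((2 * ((2 * (A - 1 / 2) * B + 2 * C * D) / (2 * Real.sqrt ((A - 1 / 2) ^ 2 + C ^ 2))) * (1 / 4 - Real.sqrt ((A - 1 / 2) ^ 2 + C ^ 2) ^ 2) - 2 * Real.sqrt ((A - 1 / 2) ^ 2 + C ^ 2) * (-(2 * Real.sqrt ((A - 1 / 2) ^ 2 + C ^ 2) * ((2 * (A - 1 / 2) * B + 2 * C * D) / (2 * Real.sqrt ((A - 1 / 2) ^ 2 + C ^ 2)))))) / (1 / 4 - Real.sqrt ((A - 1 / 2) ^ 2 + C ^ 2) ^ 2) ^ 2) * C + (2 * Real.sqrt ((A - 1 / 2) ^ 2 + C ^ 2) / (1 / 4 - Real.sqrt ((A - 1 / 2) ^ 2 + C ^ 2) ^ 2)) * D))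 / (2 * Real.sqrt (4 * Real.sqrt ((A - 1 / 2) ^ 2 + C ^ 2) ^ 2 + ((2 * Real.sqrt ((A - 1 / 2) ^ 2 + C ^ 2) / (1 / 4 - Real.sqrt ((A - 1 / 2) ^ 2 + C ^ 2) ^ 2)) * C) ^ 2))) 0 := by
    have h := hMd.sqrt (by simpa using hargpos.ne')
    convert h using 1
    norm_num
  have hs0ne : Real.sqrt (4 * Real.sqrt ((A - 1 / 2) ^ 2 + C ^ 2) ^ 2 + ((2 * Real.sqrt ((A - 1 / 2) ^ 2 + C ^ 2) / (1 / 4 - Real.sqrt ((A - 1 / 2) ^ 2 + C ^ 2) ^ 2)) * C) ^ 2) ≠ 0 := (Real.sqrt_pos.2 hargpos).ne'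
  have hfin := hNd.div hsd (by simpa using hs0ne)
  have h2 : HasDerivAt (fun ε : ℝ => (2 * Real.sqrt ((A + ε * B - 1 / 2) ^ 2 + (C + ε * D) ^ 2) / (1 / 4 - Real.sqrt ((A + ε * B - 1 / 2) ^ 2 + (C + ε * D) ^ 2) ^ 2)) * (C + ε * D) /
      Real.sqrt (4 * Real.sqrt ((A + ε * B - 1 / 2) ^ 2 + (C + ε * D) ^ 2) ^ 2 + ((2 * Real.sqrt ((A + ε * B - 1 / 2) ^ 2 + (C + ε * D) ^ 2) / (1 / 4 - Real.sqrt ((A + ε * B - 1 / 2) ^ 2 + (C + ε * D) ^ 2) ^ 2)) * (C + ε * D)) ^ 2)) (((((2 * ((2 * (A - 1 / 2) * B + 2 * C * D) / (2 * Real.sqrt ((A - 1 / 2) ^ 2 + C ^ 2))) * (1 / 4 - Real.sqrt ((A - 1 / 2) ^ 2 + C ^ 2) ^ 2) - 2 * Real.sqrt ((A - 1 / 2) ^ 2 + C ^ 2) * (-(2 * Real.sqrt ((A - 1 / 2) ^ 2 + C ^ 2) * ((2 * (A - 1 / 2) * B + 2 * C * D) / (2 * Real.sqrt ((A - 1 /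 2) ^ 2 + C ^ 2)))))) / (1 / 4 - Real.sqrt ((A - 1 / 2) ^ 2 + C ^ 2) ^ 2) ^ 2) * C + (2 * Real.sqrt ((A - 1 / 2) ^ 2 + C ^ 2) / (1 / 4 - Real.sqrt ((A - 1 / 2) ^ 2 + C ^ 2) ^ 2)) * D) * Real.sqrt (4 * Real.sqrt ((A - 1 / 2) ^ 2 + C ^ 2) ^ 2 + ((2 * Real.sqrt ((A - 1 / 2) ^ 2 + C ^ 2) / (1 / 4 - Real.sqrt ((A - 1 / 2) ^ 2 + C ^ 2) ^ 2)) * C) ^ 2) - ((2 * Real.sqrt ((A - 1 / 2) ^ 2 + C ^ 2) / (1 / 4 - Real.sqrt ((A - 1 / 2) ^ 2 + C ^ 2) ^ 2)) * C) * ((8 * Real.sqrt ((A - 1 / 2) ^ 2 + C ^ 2) * ((2 * (A - 1 / 2) * B + 2 * C * D) / (2 * Real.sqrt ((A - 1 / 2) ^ 2 + C ^ 2))) + 2 * ((2 * Real.sqrt ((A - 1 / 2) ^ 2 + C ^ 2) / (1 / 4 - Real.sqrt ((A - 1 / 2) ^ 2 + C ^ 2) ^ 2)) * C) * (((2 * ((2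 * (A - 1 / 2) * B + 2 * C * D) / (2 * Real.sqrt ((A - 1 / 2) ^ 2 + C ^ 2))) * (1 / 4 - Real.sqrt ((A - 1 / 2) ^ 2 + C ^ 2) ^ 2) - 2 * Real.sqrt ((A - 1 / 2) ^ 2 + C ^ 2) * (-(2 * Real.sqrt ((A - 1 / 2) ^ 2 + C ^ 2) * ((2 * (A - 1 / 2) * B + 2 * C * D) / (2 * Real.sqrt ((A - 1 / 2) ^ 2 + C ^ 2)))))) / (1 / 4 - Real.sqrt ((A - 1 / 2) ^ 2 + C ^ 2) ^ 2) ^ 2) * C + (2 * Real.sqrt ((A - 1 / 2) ^ 2 + C ^ 2) / (1 / 4 - Real.sqrt ((A - 1 / 2) ^ 2 + C ^ 2) ^ 2)) * D)) / (2 * Real.sqrt (4 * Real.sqrt ((A - 1 / 2) ^ 2 + C ^ 2) ^ 2 + ((2 * Real.sqrt ((A - 1 / 2) ^ 2 + C ^ 2) / (1 / 4 - Real.sqrt ((A - 1 / 2) ^ 2 + C ^ 2) ^ 2)) * C) ^ 2)))) / Real.sqrt (4 * Real.sqrt ((A - 1 / 2) ^ 2 + C ^ 2) ^ 2 + ((2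 * Real.sqrt ((A - 1 / 2) ^ 2 + C ^ 2) / (1 / 4 - Real.sqrt ((A - 1 / 2) ^ 2 + C ^ 2) ^ 2)) * C) ^ 2) ^ 2) 0 := by
    refine hfin.congr_deriv ?_
    norm_num
  exact h2
lemma stageA (ρ q t w B D G : ℝ)
    (hq : q ≠ 0) (ht : t ≠ 0) (hw : w ≠ 0)
    (hq2 : q ^ 2 = 1 - ρ ^ 2) :
    (((2 * ((2 * (G / (2 * t)) * B + 2 * (ρ / t) * D) / (2 * w)) * (q / t) -
                  2 * w * -(2 * w * ((2 * (G / (2 * t)) * B + 2 * (ρ / t) * D) / (2 * w)))) /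
                (q / t) ^ 2 *
              (ρ / t) +
            2 * w / (q / t) * D) *
          (2 * w / q) -
        2 * w / (q / t) * (ρ / t) *
          ((8 * w * ((2 * (G / (2 * t)) * B + 2 * (ρ / t) * D) / (2 * w)) +
              2 * (2 * w / (q / t) * (ρ / t)) *
                ((2 * ((2 * (G / (2 * t)) * B + 2 * (ρ / t) * D) / (2 * w)) * (q / t) -
                        2 * w * -(2 * w * ((2 * (G / (2 * t)) * B + 2 * (ρ / t) * D) / (2 * w)))) /
                      (q / t) ^ 2 *
                    (ρ / t) +
                  2 * w / (q / t) * D)) /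
            (2 * (2 * w / q)))) /
      (2 * w / q) ^ 2
    = ρ * q * (G * B + 2 * ρ * D) + q ^ 2 * t * D := by
  field_simp
  linear_combination ((-8)*B*G*q*ρ + (-16)*D*q*ρ^2 + (-16)*D*q*t^2*w^2 + (-16)*B*G*ρ*t*w^2 + (-32)*D*ρ^2*t*w^2) * hq2


lemma sscm_entries (a ρ : ℝ) (ha : 0 < a) (hρ : ρ ^ 2 < 1)
    (R : Matrix (Fin 2) (Fin 2) ℝ) (hR : R.PosDef) (hRsq : R * R = !![a, ρ; ρ, a⁻¹]) :
    ((R.trace)⁻¹ • R) 0 0 = (a + Real.sqrt (1 - ρ ^ 2)) / (a + a⁻¹ + 2 * Real.sqrt (1 - ρ ^ 2))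
    ∧ ((R.trace)⁻¹ • R) 0 1 = ρ / (a + a⁻¹ + 2 * Real.sqrt (1 - ρ ^ 2)) := by
  have hsym : R 1 0 = R 0 1 := by
    have h := congrFun (congrFun hR.1 1) 0
    simpa [Matrix.conjTranspose_apply] using h.symm
  have h00 := congrFun (congrFun hRsq 0) 0
  have h01 := congrFun (congrFun hRsq 0) 1
  have h11 := congrFun (congrFun hRsq 1) 1
  simp [Matrix.mul_apply, Fin.sum_univ_two, hsym] at h00 h01 h11
  -- h00 : R 0 0 * R 0 0 + R 0 1 * R 0 1 = a  (hopefully)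
  have hp : 0 < R 0 0 := by
    have h := hR.dotProduct_mulVec_pos (x := Pi.single 0 1) (by
      intro hcon
      simpa using congrFun hcon 0)
    simpa [dotProduct, Matrix.mulVec, Fin.sum_univ_two, Pi.single_apply] using h
  have hs : 0 < R 1 1 := by
    have h := hR.dotProduct_mulVec_pos (x := Pi.single 1 1) (by
      intro hcon
      simpa using congrFun hcon 1)
    simpa [dotProduct, Matrix.mulVec, Fin.sum_univ_two, Pi.single_apply] using h
  have hdet : 0 < R 0 0 * R 1 1 - R 0 1 * R 0 1 := by
    have h := hR.det_pos
    rw [Matrix.det_fin_two, hsym] at h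
    linarith
  have hτ : 0 < R 0 0 + R 1 1 := by linarith
  have hainv : a * a⁻¹ = 1 := mul_inv_cancel₀ ha.ne'
  set q := Real.sqrt (1 - ρ ^ 2) with hqdef
  have hq2 : q ^ 2 = 1 - ρ ^ 2 := Real.sq_sqrt (by linarith)
  have hδsq : (R 0 0 * R 1 1 - R 0 1 * R 0 1) ^ 2 = 1 - ρ ^ 2 := by
    linear_combination (R 0 1 * R 0 1 + R 1 1 * R 1 1) * h00 + a * h11 + hainv
      - (R 0 0 * R 0 1 + R 0 1 * R 1 1 + ρ) * h01
  have hδeq : R 0 0 * R 1 1 - R 0 1 * R 0 1 = q := by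
    have h1 : q = Real.sqrt ((R 0 0 * R 1 1 - R 0 1 * R 0 1) ^ 2) := by rw [hqdef, hδsq]
    rw [h1, Real.sqrt_sq hdet.le]
  have hτsq : (R 0 0 + R 1 1) ^ 2 = a + a⁻¹ + 2 * q := by
    linear_combination h00 + h11 + 2 * hδeq
  have htr : R.trace = R 0 0 + R 1 1 := by
    simp [Matrix.trace_fin_two]
  have ht : (0:ℝ) < a + a⁻¹ + 2 * q := by
    have : 0 ≤ q := Real.sqrt_nonneg _
    have : 0 < a⁻¹ := by positivity
    linarith
  have hpt : R 0 0 * (R 0 0 + R 1 1) = a + q := by linear_combination h00 + hδeq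
  have hrt : R 0 1 * (R 0 0 + R 1 1) = ρ := by linear_combination h01
  constructor
  · rw [Matrix.smul_apply, smul_eq_mul, htr, ← hτsq]
    field_simp
    linear_combination hpt
  · rw [Matrix.smul_apply, smul_eq_mul, htr, ← hτsq]
    field_simp
    linear_combination hrt


/-- influence function of the spatial sign correlation.  Let a > 0,
ρ ∈ (−1,1), (a,ρ) ≠ (1,0), V₀ = [[a,ρ],[ρ,1/a]], R its positive definite square root,
S = R / trace R the SSCM of a bivariate elliptical distribution with shape V₀, and
x = (x₁,x₂) ≠ 0.  With S_ε = (1−ε) S + ε xxᵀ/(xᵀx), the map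
ε ↦ ρ̂(s₁₁(ε), s₁₂(ε)) is differentiable at ε = 0 with the stated derivative. -/
theorem spatial_sign_correlation_influence_function
    (a ρ : ℝ) (ha : 0 < a) (hρ₁ : -1 < ρ) (hρ₂ : ρ < 1) (hne : (a, ρ) ≠ (1, 0))
    (R : Matrix (Fin 2) (Fin 2) ℝ) (hR : R.PosDef)
    (hRsq : R * R = !![a, ρ; ρ, a⁻¹])
    (x₁ x₂ : ℝ) (hx : (x₁, x₂) ≠ (0, 0)) :
    HasDerivAt (fun ε : ℝ => rhoFromS
        ((1 - ε) * ((R.trace)⁻¹ • R) 0 0 + ε * (x₁ * x₁ / (x₁ ^ 2 + x₂ ^ 2)))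
        ((1 - ε) * ((R.trace)⁻¹ • R) 0 1 + ε * (x₁ * x₂ / (x₁ ^ 2 + x₂ ^ 2))))
      ((-(((a ^ 2 + 1) * ρ * Real.sqrt (1 - ρ ^ 2) + 2 * a * ρ * (1 - ρ ^ 2))
            * (a ^ 2 * x₂ ^ 2 + x₁ ^ 2))
        - ((a ^ 4 + 6 * a ^ 2 + 1) * (ρ ^ 2 - 1)
            + 2 * a * (a ^ 2 + 1) * Real.sqrt (1 - ρ ^ 2) * (ρ ^ 2 - 2)) * (x₁ * x₂))
       / ((2 * a ^ 2 * Real.sqrt (1 - ρ ^ 2) + a * (a ^ 2 + 1)) * (x₁ ^ 2 + x₂ ^ 2)))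
      0 := by
  have hρsq : ρ ^ 2 < 1 := by nlinarith
  obtain ⟨hS00, hS01⟩ := sscm_entries a ρ ha hρsq R hR hRsq
  have hainv : 0 < a⁻¹ := by positivity
  set q := Real.sqrt (1 - ρ ^ 2) with hqdef
  have hq2 : q ^ 2 = 1 - ρ ^ 2 := Real.sq_sqrt (by linarith)
  have hqpos : 0 < q := Real.sqrt_pos.2 (by linarith)
  set t := a + a⁻¹ + 2 * q with htdef
  have ht : 0 < t := by rw [htdef]; linarith
  have hn : 0 < x₁ ^ 2 + x₂ ^ 2 := by
    have hx' : ¬(x₁ = 0 ∧ x₂ = 0) := by simpa [Prod.ext_iff] using hx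
    rcases not_and_or.mp hx' with h | h
    · have h1 : 0 < x₁ ^ 2 := by positivity
      nlinarith [sq_nonneg x₂]
    · have h1 : 0 < x₂ ^ 2 := by positivity
      nlinarith [sq_nonneg x₁]
  set n := x₁ ^ 2 + x₂ ^ 2 with hndef
  rw [hS00, hS01]
  have hfeq : (fun ε : ℝ => rhoFromS ((1 - ε) * ((a + q) / t) + ε * (x₁ * x₁ / n))
        ((1 - ε) * (ρ / t) + ε * (x₁ * x₂ / n)))
      = fun ε : ℝ => rho2 ((a + q) / t + ε * (x₁ * x₁ / n - (a + q) / t))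
        (ρ / t + ε * (x₁ * x₂ / n - ρ / t)) := by
    funext ε
    rw [rhoFromS_eq_rho2]
    congr 1 <;> ring
  rw [hfeq]
  set A := (a + q) / t with hAdef
  set C := ρ / t with hCdef
  set B := x₁ * x₁ / n - A with hBdef
  set D := x₁ * x₂ / n - C with hDdef
  have hA12 : A - 1 / 2 = (a - a⁻¹) / (2 * t) := by
    rw [hAdef, htdef]
    have h2 : a + a⁻¹ + 2 * q ≠ 0 := by rw [htdef] at ht; linarith
    field_simp
    ring
  have hWpos : (A - 1 / 2) ^ 2 + C ^ 2 ≠ 0 := by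
    intro hcon
    have h1 : A - 1 / 2 = 0 := by nlinarith [sq_nonneg (A - 1 / 2), sq_nonneg C]
    have h2 : C = 0 := by nlinarith [sq_nonneg (A - 1 / 2), sq_nonneg C]
    have hρ0 : ρ = 0 := by
      rw [hCdef] at h2
      exact (div_eq_zero_iff.mp h2).resolve_right ht.ne'
    have ha1 : a = 1 := by
      rw [hA12] at h1
      have h3 : a - a⁻¹ = 0 := by
        rcases div_eq_zero_iff.mp h1 with h | h
        · exact h
        · exact absurd h (by positivity)
      have : a * a - 1 = 0 := by
        have := mul_eq_zero_of_left h3 a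
        field_simp at this
        linarith [this]
      nlinarith
    exact hne (by rw [ha1, hρ0])
  set w := Real.sqrt ((A - 1 / 2) ^ 2 + C ^ 2) with hwdef
  have hww : w ^ 2 = (A - 1 / 2) ^ 2 + C ^ 2 := Real.sq_sqrt (by positivity)
  have hwpos : 0 < w :=
    Real.sqrt_pos.2 (lt_of_le_of_ne (by positivity) (Ne.symm hWpos))
  have hkq : 1 / 4 - w ^ 2 = q / t := by
    rw [hww, hA12, hCdef]
    rw [htdef] at ht ⊢
    field_simp
    linear_combination ((-16)*a^2) * hq2
  have h4tw : 4 * t * w ^ 2 = (a + a⁻¹) - 2 * q := by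
    rw [hww, hA12, hCdef]
    rw [htdef] at ht ⊢
    field_simp
    linear_combination ((16)*a^2) * hq2
  have hk0 : (1 / 4 - w ^ 2 : ℝ) ≠ 0 := by
    rw [hkq]; exact (div_pos hqpos ht).ne'
  have harg : 4 * w ^ 2 + (2 * w / (1 / 4 - w ^ 2) * C) ^ 2 = (2 * w / q) ^ 2 := by
    rw [hkq, hCdef]
    field_simp
    linear_combination 4 * hq2
  have hsval : (2 * w / q) = Real.sqrt (4 * w ^ 2 + (2 * w / (1 / 4 - w ^ 2) * C) ^ 2) := by
    rw [harg, Real.sqrt_sq (by positivity)]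
  refine rho2_hasDerivAt A B C D w _ _ _ _ _ _ (2 * w / q) _
    hWpos hwdef rfl rfl hk0 rfl rfl rfl rfl hsval ?_
  have hane : a ≠ 0 := ha.ne'
  have hqne : q ≠ 0 := hqpos.ne'
  have hwne : w ≠ 0 := hwpos.ne'
  have htne : t ≠ 0 := ht.ne'
  have hnne : n ≠ 0 := hn.ne'
  have h4c : 4 * (a ^ 2 + 1 + 2 * a * q) * w ^ 2 = a ^ 2 + 1 - 2 * a * q := by
    have h := h4tw
    rw [htdef] at h
    field_simp at h
    linarith
  rw [hkq, hA12, hCdef, stageA ρ q t w B D (a - a⁻¹) hqne htne hwne hq2]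
  rw [hBdef, hDdef, hAdef, hCdef, htdef, hndef]
  field_simp [show x₁ ^ 2 + x₂ ^ 2 ≠ 0 from hn.ne']
  linear_combination ((-8)*a^3*q^3*x₁*x₂ + (-12)*a^4*q^2*x₁*x₂ + (-12)*a^2*q^2*x₁*x₂ + (4)*a^3*q^2*ρ*x₁^2 + (4)*a^3*q^2*ρ*x₂^2 + (6)*a^4*q*ρ*x₂^2 + (6)*a^2*q*ρ*x₁^2 + (-6)*a^5*q*x₁*x₂ + (-20)*a^3*q*x₁*x₂ + (-6)*a*q*x₁*x₂ + (2)*a^4*q*ρ*x₁^2 + (2)*a^2*q*ρ*x₂^2 + (2)*a^5*ρ*x₂^2 + (2)*a^3*ρ*x₁^2 + (2)*a^3*ρ*x₂^2 + (2)*a*ρ*x₁^2 + (-7)*a^4*x₁*x₂ + (-7)*a^2*x₁*x₂ + (-1)*a^6*x₁*x₂ + (-1)*x₁*x₂) * hq2
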